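/- Let A be a finite tree and let α ⊆ A be a path such that every vertex of A is within distance q of α. Let s be the symmetry of α exchanging its endpoints. Then for any vertices z, z' of A and any vertex y of α, the path-metric distances in A satisfy |y,z|_A + |s(y),z'|_A ≤ |A| + max{|α|, q}, where |A| and |α| denote the number of edges of A and of α. -/

import Mathlib

open SimpleGraph Walk

section Aux

variable {V : Type*} {G : SimpleGraph V}

private lemma getVert_injOn' :
    ∀ {a b : V} (p : G.Walk a b), p.IsPath → ∀ i j, i ≤ p.length → j ≤ p.length →
      p.getVert i = p.getVert j → i = j := by
  intro a b p
  induction p with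
  | nil =>
    intro _ i j hi hj _
    simp only [Walk.length_nil, Nat.le_zero] at hi hj
    omega
  | cons h q ih =>
    intro hp i j hi hj hij
    rw [Walk.cons_isPath_iff] at hp
    rw [Walk.length_cons] at hi hj
    match i, j with
    | 0, 0 => rfl
    | 0, (m+1) =>
      exfalso
      apply hp.2
      rw [Walk.getVert_zero, Walk.getVert_cons_succ] at hij
      exact Walk.mem_support_iff_exists_getVert.mpr ⟨m, hij.symm, by omega⟩
    | (m+1), 0 =>
      exfalso
      apply hp.2
      rw [Walk.getVert_zero, Walk.getVert_cons_succ] at hij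
      exact Walk.mem_support_iff_exists_getVert.mpr ⟨m, hij, by omega⟩
    | (m+1), (n+1) =>
      rw [Walk.getVert_cons_succ, Walk.getVert_cons_succ] at hij
      have := ih hp.1 m n (by omega) (by omega) hij
      omega

private lemma exists_segment {a b : V} (p : G.Walk a b) (hp : p.IsPath) :
    ∀ (d k : ℕ), k + d ≤ p.length →
      ∃ w : G.Walk (p.getVert k) (p.getVert (k + d)), w.IsPath ∧ w.length = d ∧
        ∀ v ∈ w.support, ∃ m, k ≤ m ∧ m ≤ k + d ∧ p.getVert m = v := by
  intro d
  induction d with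
  | zero =>
    intro k hk
    refine ⟨Walk.nil, Walk.IsPath.nil, rfl, ?_⟩
    intro v hv
    simp only [Walk.support_nil, List.mem_singleton] at hv
    exact ⟨k, le_refl k, by omega, hv.symm⟩
  | succ d ih =>
    intro k hk
    have hadj : G.Adj (p.getVert k) (p.getVert (k+1)) := p.adj_getVert_succ (by omega)
    obtain ⟨w, hw, hwl, hws⟩ := ih (k+1) (by omega)
    have he : k + 1 + d = k + (d + 1) := by omega
    rw [← he]
    refine ⟨Walk.cons hadj w, ?_, by simp [hwl], ?_⟩
    · rw [Walk.cons_isPath_iff]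
      refine ⟨hw, fun hmem => ?_⟩
      obtain ⟨m, hm1, hm2, hm3⟩ := hws _ hmem
      have := getVert_injOn' p hp m k (by omega) (by omega) hm3
      omega
    · intro v hv
      rw [Walk.support_cons, List.mem_cons] at hv
      rcases hv with rfl | hv
      · exact ⟨k, le_refl _, by omega, rfl⟩
      · obtain ⟨m, hm1, hm2, hm3⟩ := hws v hv
        exact ⟨m, by omega, by omega, hm3⟩

private lemma exists_seg' {a b : V} (p : G.Walk a b) (hp : p.IsPath) {k k' : ℕ}
    (hk : k ≤ p.length) (hk' : k' ≤ p.length) :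
    ∃ σ : G.Walk (p.getVert k) (p.getVert k'), σ.IsPath ∧ ∀ v ∈ σ.support, v ∈ p.support := by
  rcases le_total k k' with h | h
  · have hkk : k + (k' - k) = k' := by omega
    rw [← hkk]
    obtain ⟨w, hw, _, hws⟩ := exists_segment p hp (k' - k) k (by omega)
    refine ⟨w, hw, fun v hv => ?_⟩
    obtain ⟨m, _, hm2, hm3⟩ := hws v hv
    exact Walk.mem_support_iff_exists_getVert.mpr ⟨m, hm3, by omega⟩
  · have hkk : k' + (k - k') = k := by omega
    rw [← hkk]
    obtain ⟨w, hw, _, hws⟩ := exists_segment p hp (k - k') k' (by omega)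
    refine ⟨w.reverse, hw.reverse, fun v hv => ?_⟩
    rw [Walk.support_reverse, List.mem_reverse] at hv
    obtain ⟨m, _, hm2, hm3⟩ := hws v hv
    exact Walk.mem_support_iff_exists_getVert.mpr ⟨m, hm3, by omega⟩

private lemma first_reach {P : V → Prop} :
    ∀ {z x : V} (w : G.Walk z x), w.IsPath → P x →
      ∃ y, P y ∧ ∃ t : G.Walk z y, t.IsPath ∧ t.length ≤ w.length ∧
        (∀ v ∈ t.support, v ∈ w.support) ∧ (∀ v ∈ t.support, P v → v = y) := by
  intro z x w
  induction w with
  | nil =>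
    intro _ hx
    refine ⟨_, hx, Walk.nil, Walk.IsPath.nil, le_refl _, fun v hv => hv, fun v hv _ => ?_⟩
    simpa using hv
  | @cons u₀ v₀ x₀ h q ih =>
    intro hw hx
    by_cases hu : P u₀
    · refine ⟨u₀, hu, Walk.nil, Walk.IsPath.nil, by simp, fun v hv => ?_, fun v hv _ => ?_⟩
      · simp only [Walk.support_nil, List.mem_singleton] at hv
        rw [hv]
        exact Walk.start_mem_support _
      · simpa using hv
    · obtain ⟨y, hy, t, ht, htl, hts, hth⟩ := ih hw.of_cons hx
      refine ⟨y, hy, Walk.cons h t, ?_, ?_, ?_, ?_⟩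
      · rw [Walk.cons_isPath_iff]
        exact ⟨ht, fun hmem => ((Walk.cons_isPath_iff h q).mp hw).2 (hts _ hmem)⟩
      · simp only [Walk.length_cons]
        omega
      · intro v hv
        rw [Walk.support_cons, List.mem_cons] at hv
        rw [Walk.support_cons, List.mem_cons]
        rcases hv with rfl | hv
        · exact Or.inl rfl
        · exact Or.inr (hts v hv)
      · intro v hv hP
        rw [Walk.support_cons, List.mem_cons] at hv
        rcases hv with rfl | hv
        · exact absurd hP hu
        · exact hth v hv hP

private lemma projection {a b : V} (p : G.Walk a b) {z x : V} (w : G.Walk z x)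
    (hw : w.IsPath) (hx : x ∈ p.support) :
    ∃ k, k ≤ p.length ∧ ∃ t : G.Walk z (p.getVert k), t.IsPath ∧ t.length ≤ w.length ∧
      ∀ v ∈ t.support, v ∈ p.support → v = p.getVert k := by
  obtain ⟨y, hy, t, ht, htl, _, hth⟩ := first_reach (P := (· ∈ p.support)) w hw hx
  obtain ⟨k, hky, hkl⟩ := Walk.mem_support_iff_exists_getVert.mp hy
  refine ⟨k, hkl, t.copy rfl hky.symm, ?_, ?_, ?_⟩
  · simpa using ht
  · simpa using htl
  · intro v hv hvp
    rw [Walk.support_copy] at hv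
    rw [hky]
    exact hth v hv hvp

private lemma isPath_append {u v w : V} {p : G.Walk u v} {q : G.Walk v w}
    (hp : p.IsPath) (hq : q.IsPath) (h : ∀ x, x ∈ p.support → x ∈ q.support → x = v) :
    (p.append q).IsPath := by
  rw [Walk.isPath_def, Walk.support_append]
  refine List.Nodup.append hp.support_nodup hq.support_nodup.tail ?_
  intro x hx hx'
  have hxq : x ∈ q.support := List.mem_of_mem_tail hx'
  have hxv : x = v := h x hx hxq
  have hnd := hq.support_nodup
  rw [Walk.support_eq_cons q, List.nodup_cons] at hnd
  exact hnd.1 (hxv ▸ hx')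

private lemma branch_disjoint (hG : G.IsTree) {a b : V} (p : G.Walk a b) (hp : p.IsPath)
    {k k' : ℕ} (hk : k ≤ p.length) (hk' : k' ≤ p.length) (hne : k ≠ k')
    {z z' : V} (w₁ : G.Walk z (p.getVert k)) (w₂ : G.Walk z' (p.getVert k'))
    (h₁ : w₁.IsPath) (h₂ : w₂.IsPath)
    (hh₁ : ∀ v ∈ w₁.support, v ∈ p.support → v = p.getVert k)
    (hh₂ : ∀ v ∈ w₂.support, v ∈ p.support → v = p.getVert k') :
    ∀ v, v ∈ w₁.support → v ∈ w₂.support → False := by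
  classical
  intro v hv₁ hv₂
  have hv₁r : v ∈ w₁.reverse.support := by rwa [Walk.support_reverse, List.mem_reverse]
  have hupath : (w₁.reverse.takeUntil v hv₁r).IsPath := h₁.reverse.takeUntil hv₁r
  obtain ⟨y, hy, t, ht, _, hts, hmin⟩ :=
    first_reach (P := (· ∈ w₂.support)) (w₁.reverse.takeUntil v hv₁r) hupath hv₂
  have htsub : ∀ x ∈ t.support, x ∈ w₁.support := by
    intro x hx
    have h1 := hts x hx
    have h2 := Walk.support_takeUntil_subset _ hv₁r h1
    rwa [Walk.support_reverse, List.mem_reverse] at h2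
  have hyr : y ∈ w₂.reverse.support := by rwa [Walk.support_reverse, List.mem_reverse]
  have hspath : (w₂.reverse.takeUntil y hyr).IsPath := h₂.reverse.takeUntil hyr
  have hssub : ∀ x ∈ (w₂.reverse.takeUntil y hyr).support, x ∈ w₂.support := by
    intro x hx
    have h2 := Walk.support_takeUntil_subset _ hyr hx
    rwa [Walk.support_reverse, List.mem_reverse] at h2
  have hQ : (t.append (w₂.reverse.takeUntil y hyr).reverse).IsPath := by
    refine isPath_append ht hspath.reverse ?_
    intro x hx hx'
    rw [Walk.support_reverse, List.mem_reverse] at hx'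
    exact hmin x hx (hssub x hx')
  obtain ⟨σ, hσ, hσsub⟩ := exists_seg' p hp hk hk'
  obtain ⟨P0, _, huniq⟩ := hG.existsUnique_path (p.getVert k) (p.getVert k')
  have hQσ : t.append (w₂.reverse.takeUntil y hyr).reverse = σ :=
    ((huniq _ hQ).trans (huniq _ hσ).symm)
  have hyQ : y ∈ (t.append (w₂.reverse.takeUntil y hyr).reverse).support := by
    rw [Walk.mem_support_append_iff]
    exact Or.inl t.end_mem_support
  rw [hQσ] at hyQ
  have hyp : y ∈ p.support := hσsub y hyQ
  have e1 : y = p.getVert k := hh₁ y (htsub y t.end_mem_support) hyp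
  have e2 : y = p.getVert k' := hh₂ y hy hyp
  exact hne (getVert_injOn' p hp k k' hk hk' (by rw [← e1, ← e2]))

end Aux

/-- **Statement 13** (Sublemma 4.7).  Let `A` be a finite tree and `α ⊆ A` a path
(recorded as an embedded walk `p` from `a` to `b`) such that every vertex of `A`
is within distance `q` of `α`.  The symmetry `s` of `α` exchanging its endpoints
sends the `i`-th vertex `p.getVert i` of `α` to `p.getVert (p.length - i)`.
Then for any vertices `z, z'` of `A` and any vertex `y = p.getVert i` of `α`,
`|y,z|_A + |s(y),z'|_A ≤ |A| + max {|α|, q}`, where `|A|` and `|α|` denote the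
numbers of edges. -/
theorem tree_symmetry_distance_bound {V : Type*} [Fintype V] (G : SimpleGraph V)
    (hG : G.IsTree) {a b : V} (p : G.Walk a b) (hp : p.IsPath) (q : ℕ)
    (hq : ∀ v : V, ∃ j ≤ p.length, G.dist v (p.getVert j) ≤ q)
    (z z' : V) (i : ℕ) (hi : i ≤ p.length) :
    G.dist (p.getVert i) z + G.dist (p.getVert (p.length - i)) z' ≤
      G.edgeSet.ncard + max p.length q := by
  classical
  obtain ⟨j, hj, hjd⟩ := hq z
  obtain ⟨j', hj', hjd'⟩ := hq z'
  obtain ⟨w₀, hw₀⟩ := hG.isConnected.exists_walk_length_eq_dist z (p.getVert j)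
  obtain ⟨w₀', hw₀'⟩ := hG.isConnected.exists_walk_length_eq_dist z' (p.getVert j')
  have hjsup : p.getVert j ∈ p.support := Walk.mem_support_iff_exists_getVert.mpr ⟨j, rfl, hj⟩
  have hjsup' : p.getVert j' ∈ p.support := Walk.mem_support_iff_exists_getVert.mpr ⟨j', rfl, hj'⟩
  obtain ⟨k, hk, w₁, hw₁, hl₁, hh₁⟩ := projection p w₀.bypass w₀.bypass_isPath hjsup
  obtain ⟨k', hk', w₂, hw₂, hl₂, hh₂⟩ := projection p w₀'.bypass w₀'.bypass_isPath hjsup'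
  have hq₁ : w₁.length ≤ q :=
    le_trans hl₁ (le_trans w₀.length_bypass_le (by rw [hw₀]; exact hjd))
  have hq₂ : w₂.length ≤ q :=
    le_trans hl₂ (le_trans w₀'.length_bypass_le (by rw [hw₀']; exact hjd'))
  have hseg2 : ∀ i₁ j₁ : ℕ, i₁ ≤ p.length → j₁ ≤ p.length →
      G.dist (p.getVert i₁) (p.getVert j₁) ≤ (j₁ - i₁) + (i₁ - j₁) := by
    intro i₁ j₁ hi₁ hj₁
    rcases le_total i₁ j₁ with h | h
    · obtain ⟨w, _, hwl, _⟩ := exists_segment p hp (j₁ - i₁) i₁ (by omega)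
      have hd := SimpleGraph.dist_le w
      rw [hwl, show i₁ + (j₁ - i₁) = j₁ from by omega] at hd
      omega
    · obtain ⟨w, _, hwl, _⟩ := exists_segment p hp (i₁ - j₁) j₁ (by omega)
      have hd := SimpleGraph.dist_le w
      rw [hwl, show j₁ + (i₁ - j₁) = i₁ from by omega, SimpleGraph.dist_comm] at hd
      omega
  have h1 : G.dist (p.getVert i) z ≤ (k - i) + (i - k) + w₁.length := by
    have t1 := hseg2 i k hi hk
    have t2 : G.dist (p.getVert k) z ≤ w₁.length := by
      rw [SimpleGraph.dist_comm]; exact SimpleGraph.dist_le w₁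
    have t3 := hG.isConnected.dist_triangle (u := p.getVert i) (v := p.getVert k) (w := z)
    omega
  have h2 : G.dist (p.getVert (p.length - i)) z' ≤
      (k' - (p.length - i)) + ((p.length - i) - k') + w₂.length := by
    have t1 := hseg2 (p.length - i) k' (by omega) hk'
    have t2 : G.dist (p.getVert k') z' ≤ w₂.length := by
      rw [SimpleGraph.dist_comm]; exact SimpleGraph.dist_le w₂
    have t3 := hG.isConnected.dist_triangle
      (u := p.getVert (p.length - i)) (v := p.getVert k') (w := z')
    omega
  have hScard : p.support.toFinset.card = p.length + 1 := by
    rw [List.toFinset_card_of_nodup hp.support_nodup, Walk.length_support]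
  have hT : ∀ (kk : ℕ), kk ≤ p.length → ∀ (zz : V) (w : G.Walk zz (p.getVert kk)), w.IsPath →
      (∀ v ∈ w.support, v ∈ p.support → v = p.getVert kk) →
      (w.support.toFinset \ p.support.toFinset).card = w.length := by
    intro kk hkk zz w hw hh
    have hA : w.support.toFinset.card = w.length + 1 := by
      rw [List.toFinset_card_of_nodup hw.support_nodup, Walk.length_support]
    have hint : w.support.toFinset ∩ p.support.toFinset = {p.getVert kk} := by
      ext v
      simp only [Finset.mem_inter, List.mem_toFinset, Finset.mem_singleton]
      constructor
      · rintro ⟨hv1, hv2⟩; exact hh v hv1 hv2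
      · rintro rfl
        exact ⟨w.end_mem_support, Walk.mem_support_iff_exists_getVert.mpr ⟨kk, rfl, hkk⟩⟩
    have hc := Finset.card_sdiff_add_card_inter w.support.toFinset p.support.toFinset
    rw [hint, Finset.card_singleton] at hc
    omega
  have hT₁ := hT k hk z w₁ hw₁ hh₁
  have hT₂ := hT k' hk' z' w₂ hw₂ hh₂
  have hdisj₁ : Disjoint p.support.toFinset (w₁.support.toFinset \ p.support.toFinset) :=
    Finset.disjoint_sdiff
  have hcardV : G.edgeSet.ncard + 1 = Fintype.card V := by
    have hc := hG.card_edgeFinset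
    rw [← hc]
    congr 1
    rw [Set.ncard_eq_toFinset_card']
    convert rfl
    ext e
    simp
  have hmax1 : p.length ≤ max p.length q := le_max_left _ _
  have hmax2 : q ≤ max p.length q := le_max_right _ _
  by_cases hkk : k = k'
  · subst hkk
    have hcount : (p.support.toFinset ∪ (w₁.support.toFinset \ p.support.toFinset)).card ≤
        Fintype.card V := le_trans (Finset.card_le_univ _) (le_of_eq Finset.card_univ)
    rw [Finset.card_union_of_disjoint hdisj₁, hScard, hT₁] at hcount
    omega
  · have hdisjT : Disjoint (w₁.support.toFinset \ p.support.toFinset)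
        (w₂.support.toFinset \ p.support.toFinset) := by
      rw [Finset.disjoint_left]
      intro v hv hv'
      exact branch_disjoint hG p hp hk hk' hkk w₁ w₂ hw₁ hw₂ hh₁ hh₂ v
        (List.mem_toFinset.mp (Finset.mem_sdiff.mp hv).1)
        (List.mem_toFinset.mp (Finset.mem_sdiff.mp hv').1)
    have hdisjU : Disjoint (p.support.toFinset ∪ (w₁.support.toFinset \ p.support.toFinset))
        (w₂.support.toFinset \ p.support.toFinset) := by
      rw [Finset.disjoint_union_left]
      exact ⟨Finset.disjoint_sdiff, hdisjT⟩
    have hcount : ((p.support.toFinset ∪ (w₁.support.toFinset \ p.support.toFinset)) ∪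
        (w₂.support.toFinset \ p.support.toFinset)).card ≤ Fintype.card V :=
      le_trans (Finset.card_le_univ _) (le_of_eq Finset.card_univ)
    rw [Finset.card_union_of_disjoint hdisjU, Finset.card_union_of_disjoint hdisj₁,
      hScard, hT₁, hT₂] at hcount
    omega
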